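/- Let F be a set of skew-decomposable permutations and X = Avs(F) the class of separable permutations avoiding all elements of F. Then D[X] = Avs((F ⊕ 1) ∪ (1 ⊕ F)), where D is the class of decreasing permutations. -/

import Mathlib

/-- A permutation of some finite length `n`, as a bijection of `Fin n`. -/
abbrev PPerm : Type := Σ n : ℕ, Equiv.Perm (Fin n)

/-- `Contains π σ` : the pattern `σ` occurs in (is contained in) `π`. -/
def Contains (π σ : PPerm) : Prop :=
  ∃ f : Fin σ.1 → Fin π.1, StrictMono f ∧
    ∀ i j, σ.2 i < σ.2 j ↔ π.2 (f i) < π.2 (f j)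

/-- A permutation class: a set of permutations closed downwards under containment. -/
def IsPermClass (C : Set PPerm) : Prop :=
  ∀ π ∈ C, ∀ σ : PPerm, Contains π σ → σ ∈ C

/-- `σ` is (exactly) the pattern of the set `S` of points of `π`. -/
def PatternOf (π : PPerm) (S : Set (Fin π.1)) (σ : PPerm) : Prop :=
  ∃ f : Fin σ.1 → Fin π.1, StrictMono f ∧ Set.range f = S ∧
    ∀ i j, σ.2 i < σ.2 j ↔ π.2 (f i) < π.2 (f j)

/-- The points of `π` lying in `S` contain an occurrence of `σ`. -/
def ContainsIn (π : PPerm) (S : Set (Fin π.1)) (σ : PPerm) : Prop :=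
  ∃ f : Fin σ.1 → Fin π.1, StrictMono f ∧ (∀ i, f i ∈ S) ∧
    ∀ i j, σ.2 i < σ.2 j ↔ π.2 (f i) < π.2 (f j)

/-- `π` is a merge of `σ` and `τ`: its points split into a part with pattern `σ`
and a part with pattern `τ`. -/
def IsMerge (π σ τ : PPerm) : Prop :=
  ∃ S : Set (Fin π.1), PatternOf π S σ ∧ PatternOf π Sᶜ τ

/-- Merge of two classes. -/
def MergeCl (C D : Set PPerm) : Set PPerm :=
  {π | ∃ σ ∈ C, ∃ τ ∈ D, IsMerge π σ τ}

/-- The empty permutation. -/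
def pempty : PPerm := ⟨0, 1⟩

/-- The singleton permutation `1`. -/
def pone : PPerm := ⟨1, 1⟩

/-- Iterated merge of a list of classes. -/
def MergeAll : List (Set PPerm) → Set PPerm
  | [] => {pempty}
  | [C] => C
  | C :: D :: Cs => MergeCl C (MergeAll (D :: Cs))

/-- A class is splittable if it is contained in the merge of finitely many
of its proper subclasses. -/
def Splittable (C : Set PPerm) : Prop :=
  ∃ Cs : List (Set PPerm), Cs ≠ [] ∧
    (∀ D ∈ Cs, IsPermClass D ∧ D ⊆ C ∧ D ≠ C) ∧ C ⊆ MergeAll Cs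

/-- A class is atomic if it is not the union of two proper subclasses. -/
def Atomic (C : Set PPerm) : Prop :=
  ¬ ∃ D E : Set PPerm, IsPermClass D ∧ IsPermClass E ∧
      D ⊆ C ∧ D ≠ C ∧ E ⊆ C ∧ E ≠ C ∧ C = D ∪ E

/-- Inflation `A[B]` of a class `A` by a class `B`: `π` decomposes into
consecutive nonempty blocks (given by the fibres of the monotone surjection `g`),
the relative order of distinct blocks follows `σ ∈ A`, and each block has its
pattern in `B`. -/
def Inflate (A B : Set PPerm) : Set PPerm :=
  {π | ∃ σ ∈ A, ∃ g : Fin π.1 → Fin σ.1, Monotone g ∧ Function.Surjective g ∧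
    (∀ p q, g p ≠ g q → (π.2 p < π.2 q ↔ σ.2 (g p) < σ.2 (g q))) ∧
    ∀ b : Fin σ.1, ∃ τ ∈ B, PatternOf π {p | g p = b} τ}

/-- Direct sum `σ ⊕ τ`. -/
def psum (σ τ : PPerm) : PPerm :=
  ⟨σ.1 + τ.1, finSumFinEquiv.permCongr (σ.2.sumCongr τ.2)⟩

/-- Skew sum `σ ⊖ τ`. -/
def pskew (σ τ : PPerm) : PPerm :=
  ⟨σ.1 + τ.1,
    finSumFinEquiv.symm.trans ((σ.2.sumCongr τ.2).trans
      ((Equiv.sumComm (Fin σ.1) (Fin τ.1)).trans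
        (finSumFinEquiv.trans (finCongr (Nat.add_comm τ.1 σ.1)))))⟩

/-- Sum-decomposable: a direct sum of two nonempty permutations. -/
def SumDecomp (π : PPerm) : Prop :=
  ∃ σ τ : PPerm, 0 < σ.1 ∧ 0 < τ.1 ∧ π = psum σ τ

/-- Skew-decomposable: a skew sum of two nonempty permutations. -/
def SkewDecomp (π : PPerm) : Prop :=
  ∃ σ τ : PPerm, 0 < σ.1 ∧ 0 < τ.1 ∧ π = pskew σ τ

def SumClosed (C : Set PPerm) : Prop := ∀ σ ∈ C, ∀ τ ∈ C, psum σ τ ∈ C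

def SkewClosed (C : Set PPerm) : Prop := ∀ σ ∈ C, ∀ τ ∈ C, pskew σ τ ∈ C

/-- The class of permutations avoiding the pattern `σ`. -/
def Av (σ : PPerm) : Set PPerm := {π | ¬ Contains π σ}

/-- The basis of a class: minimal permutations not belonging to it. -/
def PBasis (C : Set PPerm) : Set PPerm :=
  {π | π ∉ C ∧ ∀ σ : PPerm, Contains π σ → σ ≠ π → σ ∈ C}

/-- An interval of `π`: a set of points contiguous in positions and in values. -/
def IsInterval (π : PPerm) (S : Set (Fin π.1)) : Prop :=
  (∀ a ∈ S, ∀ b ∈ S, ∀ c, a ≤ c → c ≤ b → c ∈ S) ∧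
  (∀ a ∈ S, ∀ b ∈ S, ∀ c, π.2 a ≤ π.2 c → π.2 c ≤ π.2 b → c ∈ S)

/-- A simple permutation: its only intervals are the subsingletons and the whole. -/
def SimplePerm (π : PPerm) : Prop :=
  ∀ S : Set (Fin π.1), IsInterval π S → S.Subsingleton ∨ S = Set.univ

/-- Build a permutation from a function with an explicit inverse. -/
def mkP {n : ℕ} (f g : Fin n → Fin n)
    (h₁ : ∀ i, g (f i) = i) (h₂ : ∀ i, f (g i) = i) : PPerm :=
  ⟨n, ⟨f, g, h₁, h₂⟩⟩

def p12 : PPerm := ⟨2, 1⟩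
def p21 : PPerm := mkP ![1,0] ![1,0] (by decide) (by decide)
def p213 : PPerm := mkP ![1,0,2] ![1,0,2] (by decide) (by decide)
def p231 : PPerm := mkP ![1,2,0] ![2,0,1] (by decide) (by decide)
def p312 : PPerm := mkP ![2,0,1] ![1,2,0] (by decide) (by decide)
def p1234 : PPerm := ⟨4, 1⟩
def p2143 : PPerm := mkP ![1,0,3,2] ![1,0,3,2] (by decide) (by decide)
def p3412 : PPerm := mkP ![2,3,0,1] ![2,3,0,1] (by decide) (by decide)
def p4321 : PPerm := mkP ![3,2,1,0] ![3,2,1,0] (by decide) (by decide)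
def p2413 : PPerm := mkP ![1,3,0,2] ![2,0,3,1] (by decide) (by decide)
def p3142 : PPerm := mkP ![2,0,3,1] ![1,3,0,2] (by decide) (by decide)

/-- The class `I` of increasing permutations. -/
def IncCl : Set PPerm := Av p21
/-- The class `D` of decreasing permutations. -/
def DecCl : Set PPerm := Av p12
/-- The class `Av(213)`. -/
def Av213 : Set PPerm := Av p213
/-- The class `L = Av(231, 312)` of layered permutations. -/
def Layered : Set PPerm := Av p231 ∩ Av p312
/-- Separable permutations, characterised by avoidance of `2413` and `3142`. -/
def SepA : Set PPerm := Av p2413 ∩ Av p3142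
/-- Separable permutations avoiding every element of `F`. -/
def Avs (F : Set PPerm) : Set PPerm := {π ∈ SepA | ∀ τ ∈ F, ¬ Contains π τ}
/-- The class of separable permutations, defined as the smallest permutation class
containing `1` and closed under direct sums and skew sums. -/
def SepCl : Set PPerm :=
  ⋂₀ {C : Set PPerm | IsPermClass C ∧ pone ∈ C ∧
      ∀ σ ∈ C, ∀ τ ∈ C, psum σ τ ∈ C ∧ pskew σ τ ∈ C}
namespace Stmt17aux

open Finset

variable {π σ τ ρ υ : PPerm}

lemma contains_refl (π : PPerm) : Contains π π := ⟨id, strictMono_id, fun _ _ => Iff.rfl⟩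

lemma contains_trans (h1 : Contains π σ) (h2 : Contains σ ρ) : Contains π ρ := by
  obtain ⟨f, hf, hf2⟩ := h1; obtain ⟨g, hg, hg2⟩ := h2
  exact ⟨f ∘ g, hf.comp hg, fun i j => (hg2 i j).trans (hf2 _ _)⟩

lemma sepA_closed (h : π ∈ SepA) (hc : Contains π σ) : σ ∈ SepA :=
  ⟨fun h2 => h.1 (contains_trans hc h2), fun h2 => h.2 (contains_trans hc h2)⟩

lemma avs_closed {G : Set PPerm} (h : π ∈ Avs G) (hc : Contains π σ) : σ ∈ Avs G :=
  ⟨sepA_closed h.1 hc, fun τ hτ h2 => h.2 τ hτ (contains_trans hc h2)⟩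

def cutSum (π : PPerm) (k : ℕ) : Prop :=
  ∀ p q : Fin π.1, (p : ℕ) < k → k ≤ (q : ℕ) → π.2 p < π.2 q

def cutSkew (π : PPerm) (k : ℕ) : Prop :=
  ∀ p q : Fin π.1, (p : ℕ) < k → k ≤ (q : ℕ) → π.2 q < π.2 p

lemma not_cut_both {k d : ℕ} (hk : 0 < k) (hk2 : k < π.1)
    (hd : 0 < d) (hd2 : d < π.1) (h1 : cutSum π k) (h2 : cutSkew π d) : False := by
  have hn : 0 < π.1 := lt_trans hk hk2
  set p : Fin π.1 := ⟨0, hn⟩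
  set q : Fin π.1 := ⟨π.1 - 1, by omega⟩
  have e1 : π.2 p < π.2 q := h1 p q (by simp [p]; omega) (by simp [q]; omega)
  have e2 : π.2 q < π.2 p := h2 p q (by simp [p]; omega) (by simp [q]; omega)
  exact absurd e1 (lt_asymm e2)

lemma psum_apply_left (σ τ : PPerm) (i : Fin σ.1) :
    (psum σ τ).2 (Fin.castAdd τ.1 i) = Fin.castAdd τ.1 (σ.2 i) := by
  show finSumFinEquiv (Equiv.sumCongr σ.2 τ.2 (finSumFinEquiv.symm (Fin.castAdd τ.1 i))) = _
  simp

lemma psum_apply_right (σ τ : PPerm) (j : Fin τ.1) :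
    (psum σ τ).2 (Fin.natAdd σ.1 j) = Fin.natAdd σ.1 (τ.2 j) := by
  show finSumFinEquiv (Equiv.sumCongr σ.2 τ.2 (finSumFinEquiv.symm (Fin.natAdd σ.1 j))) = _
  simp

lemma pskew_val_left (σ τ : PPerm) (i : Fin σ.1) :
    (((pskew σ τ).2 (Fin.castAdd τ.1 i)) : ℕ) = τ.1 + (σ.2 i : ℕ) := by
  show ((finCongr (Nat.add_comm τ.1 σ.1) (finSumFinEquiv (Equiv.sumComm _ _ (Equiv.sumCongr σ.2 τ.2 (finSumFinEquiv.symm (Fin.castAdd τ.1 i))))) : Fin (σ.1 + τ.1)) : ℕ) = _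
  simp; omega

lemma pskew_val_right (σ τ : PPerm) (j : Fin τ.1) :
    (((pskew σ τ).2 (Fin.natAdd σ.1 j)) : ℕ) = (τ.2 j : ℕ) := by
  show ((finCongr (Nat.add_comm τ.1 σ.1) (finSumFinEquiv (Equiv.sumComm _ _ (Equiv.sumCongr σ.2 τ.2 (finSumFinEquiv.symm (Fin.natAdd σ.1 j))))) : Fin (σ.1 + τ.1)) : ℕ) = _
  simp

lemma castAdd_lt_iff {m n : ℕ} {i j : Fin m} :
    Fin.castAdd n i < Fin.castAdd n j ↔ i < j := by
  rw [Fin.lt_def, Fin.coe_castAdd, Fin.coe_castAdd, ← Fin.lt_def]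

lemma natAdd_lt_iff {m n : ℕ} {i j : Fin n} :
    Fin.natAdd m i < Fin.natAdd m j ↔ i < j := by
  rw [Fin.lt_def, Fin.coe_natAdd, Fin.coe_natAdd, Fin.lt_def]; omega

lemma castAdd_lt_natAdd {m n : ℕ} (i : Fin m) (j : Fin n) :
    Fin.castAdd n i < Fin.natAdd m j := by
  rw [Fin.lt_def, Fin.coe_castAdd, Fin.coe_natAdd]; have := i.isLt; omega

lemma skewDecomp_cut (h : SkewDecomp υ) :
    2 ≤ υ.1 ∧ ∃ k, 0 < k ∧ k < υ.1 ∧ cutSkew υ k := by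
  obtain ⟨σ, τ, hσ, hτ, rfl⟩ := h
  have hlen : (pskew σ τ).1 = σ.1 + τ.1 := rfl
  refine ⟨by rw [hlen]; omega, σ.1, hσ, by rw [hlen]; omega, ?_⟩
  intro p q hp hq
  have hp' : (p : ℕ) < σ.1 := hp
  have hq' : (q : ℕ) < σ.1 + τ.1 := by have := q.isLt; omega
  have e1 : p = Fin.castAdd τ.1 ⟨(p : ℕ), hp'⟩ := by apply Fin.ext; rfl
  have e2 : q = Fin.natAdd σ.1 ⟨(q : ℕ) - σ.1, by omega⟩ := by
    apply Fin.ext; simp; omega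
  rw [Fin.lt_def, e1, e2]
  rw [pskew_val_left σ τ ⟨(p : ℕ), hp'⟩, pskew_val_right σ τ ⟨(q : ℕ) - σ.1, by omega⟩]
  have := (τ.2 ⟨(q : ℕ) - σ.1, by omega⟩).isLt
  omega

lemma castAdd_strictMono (m n : ℕ) : StrictMono (Fin.castAdd n : Fin m → Fin (m + n)) :=
  fun _ _ hij => castAdd_lt_iff.mpr hij

lemma natAdd_strictMono (m n : ℕ) : StrictMono (Fin.natAdd m : Fin n → Fin (m + n)) :=
  fun _ _ hij => natAdd_lt_iff.mpr hij

lemma contains_psum_intro {f : Fin σ.1 → Fin π.1} {g : Fin τ.1 → Fin π.1}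
    (hf : StrictMono f) (hg : StrictMono g)
    (hfi : ∀ i j, σ.2 i < σ.2 j ↔ π.2 (f i) < π.2 (f j))
    (hgi : ∀ i j, τ.2 i < τ.2 j ↔ π.2 (g i) < π.2 (g j))
    (hsep : ∀ i j, f i < g j) (hval : ∀ i j, π.2 (f i) < π.2 (g j)) :
    Contains π (psum σ τ) := by
  refine ⟨fun (p : Fin (σ.1 + τ.1)) => Fin.addCases (fun i => f i) (fun j => g j) p, ?_, ?_⟩
  · intro p q hpq
    induction p using Fin.addCases with
    | left i =>
      induction q using Fin.addCases with
      | left j =>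
        simp only [Fin.addCases_left]
        exact hf (castAdd_lt_iff.mp hpq)
      | right j => simpa using hsep i j
    | right i =>
      induction q using Fin.addCases with
      | left j =>
        exact absurd (lt_trans (castAdd_lt_natAdd j i) hpq) (lt_irrefl _)
      | right j =>
        simp only [Fin.addCases_right]
        exact hg (natAdd_lt_iff.mp hpq)
  · intro p q
    induction p using Fin.addCases with
    | left i =>
      induction q using Fin.addCases with
      | left j =>
        erw [psum_apply_left, psum_apply_left, castAdd_lt_iff]
        simp only [Fin.addCases_left]
        exact hfi i j
      | right j =>
        rw [psum_apply_left, psum_apply_right]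
        simp only [Fin.addCases_left, Fin.addCases_right]
        exact iff_of_true (castAdd_lt_natAdd _ _) (hval i j)
    | right i =>
      induction q using Fin.addCases with
      | left j =>
        rw [psum_apply_right, psum_apply_left]
        simp only [Fin.addCases_left, Fin.addCases_right]
        exact iff_of_false (fun hh => absurd (lt_trans (castAdd_lt_natAdd _ _) hh)
          (lt_irrefl _)) (asymm (hval j i))
      | right j =>
        erw [psum_apply_right, psum_apply_right, natAdd_lt_iff]
        simp only [Fin.addCases_right]
        exact hgi i j

lemma contains_psum_elim (h : Contains π (psum σ τ)) :
    ∃ (f : Fin σ.1 → Fin π.1) (g : Fin τ.1 → Fin π.1), StrictMono f ∧ StrictMono g ∧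
      (∀ i j, σ.2 i < σ.2 j ↔ π.2 (f i) < π.2 (f j)) ∧
      (∀ i j, τ.2 i < τ.2 j ↔ π.2 (g i) < π.2 (g j)) ∧
      (∀ i j, f i < g j) ∧ (∀ i j, π.2 (f i) < π.2 (g j)) := by
  obtain ⟨h0, hm, hiff⟩ := h
  refine ⟨fun i => h0 (Fin.castAdd τ.1 i), fun j => h0 (Fin.natAdd σ.1 j),
    hm.comp (castAdd_strictMono _ _), hm.comp (natAdd_strictMono _ _), ?_, ?_, ?_, ?_⟩
  · intro i j
    have := hiff (Fin.castAdd τ.1 i) (Fin.castAdd τ.1 j)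
    erw [psum_apply_left, psum_apply_left, castAdd_lt_iff] at this
    exact this
  · intro i j
    have := hiff (Fin.natAdd σ.1 i) (Fin.natAdd σ.1 j)
    erw [psum_apply_right, psum_apply_right, natAdd_lt_iff] at this
    exact this
  · intro i j
    exact hm (castAdd_lt_natAdd i j)
  · intro i j
    have := hiff (Fin.castAdd τ.1 i) (Fin.natAdd σ.1 j)
    rw [psum_apply_left, psum_apply_right] at this
    exact this.mp (castAdd_lt_natAdd _ _)
lemma fin1_not_lt {n : ℕ} (hn : n = 1) (i j : Fin n) : ¬ i < j := by
  subst hn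
  have h1 := i.isLt; have h2 := j.isLt
  intro h; have := Fin.lt_def.mp h; omega

lemma pone_not_lt (i j : Fin pone.1) : ¬ i < j := fin1_not_lt rfl i j

lemma contains_psum_pone_intro {f : Fin σ.1 → Fin π.1} (hf : StrictMono f)
    (hfi : ∀ i j, σ.2 i < σ.2 j ↔ π.2 (f i) < π.2 (f j)) {m : Fin π.1}
    (hpos : ∀ i, f i < m) (hval : ∀ i, π.2 (f i) < π.2 m) :
    Contains π (psum σ pone) := by
  refine contains_psum_intro hf (g := fun _ => m)
    (fun i j hij => absurd hij (pone_not_lt i j)) hfi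
    (fun i j => iff_of_false (pone_not_lt _ _) (lt_irrefl _))
    (fun i j => hpos i) (fun i j => hval i)

lemma contains_pone_psum_intro {f : Fin σ.1 → Fin π.1} (hf : StrictMono f)
    (hfi : ∀ i j, σ.2 i < σ.2 j ↔ π.2 (f i) < π.2 (f j)) {m : Fin π.1}
    (hpos : ∀ i, m < f i) (hval : ∀ i, π.2 m < π.2 (f i)) :
    Contains π (psum pone σ) := by
  refine contains_psum_intro (f := fun _ => m) (g := f)
    (fun i j hij => absurd hij (pone_not_lt i j)) hf
    (fun i j => iff_of_false (pone_not_lt _ _) (lt_irrefl _)) hfi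
    (fun i j => hpos j) (fun i j => hval j)

lemma contains_psum_pone_elim (h : Contains π (psum σ pone)) :
    ∃ f : Fin σ.1 → Fin π.1, StrictMono f ∧
      (∀ i j, σ.2 i < σ.2 j ↔ π.2 (f i) < π.2 (f j)) ∧
      ∃ m : Fin π.1, (∀ i, f i < m) ∧ (∀ i, π.2 (f i) < π.2 m) := by
  obtain ⟨f, g, hf, _, hfi, _, hsep, hval⟩ := contains_psum_elim h
  exact ⟨f, hf, hfi, g ⟨0, by decide⟩, fun i => hsep i _, fun i => hval i _⟩

lemma contains_pone_psum_elim (h : Contains π (psum pone σ)) :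
    ∃ f : Fin σ.1 → Fin π.1, StrictMono f ∧
      (∀ i j, σ.2 i < σ.2 j ↔ π.2 (f i) < π.2 (f j)) ∧
      ∃ m : Fin π.1, (∀ i, m < f i) ∧ (∀ i, π.2 m < π.2 (f i)) := by
  obtain ⟨f, g, _, hg, _, hgi, hsep, hval⟩ := contains_psum_elim h
  exact ⟨g, hg, hgi, f ⟨0, by decide⟩, fun i => hsep _ i, fun i => hval _ i⟩

lemma decCl_rel (h : σ ∈ DecCl) {i j : Fin σ.1} (hij : i < j) : σ.2 j < σ.2 i := by
  by_contra hcon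
  push_neg at hcon
  have hne : σ.2 i ≠ σ.2 j := fun e => (ne_of_lt hij) (σ.2.injective e)
  have hlt : σ.2 i < σ.2 j := lt_of_le_of_ne hcon hne
  apply h
  refine ⟨![i, j], ?_, ?_⟩
  · intro a b hab
    fin_cases a <;> fin_cases b <;>
      first
        | exact absurd hab (by decide)
        | exact hij
        | simpa using hij
  · intro a b
    fin_cases a <;> fin_cases b
    · exact iff_of_false (lt_irrefl _) (by simp)
    · exact iff_of_true (by decide) (by exact hlt)
    · exact iff_of_false (by decide) (by exact asymm hlt)
    · exact iff_of_false (lt_irrefl _) (by simp)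

lemma decCl_of_rev (h : ∀ i j : Fin σ.1, i < j → σ.2 j < σ.2 i) : σ ∈ DecCl := by
  rintro ⟨f, hm, hiff⟩
  have h01 : (⟨0, by decide⟩ : Fin p12.1) < ⟨1, by decide⟩ := by decide
  have := (hiff ⟨0, by decide⟩ ⟨1, by decide⟩).mp (by decide)
  exact absurd this (asymm (h _ _ (hm h01)))
lemma restrict_mem_iff (π : PPerm) (S : Finset (Fin π.1)) :
    ∀ x, x ∈ S ↔ π.2 x ∈ S.image π.2 := by
  intro x
  constructor
  · exact fun hx => Finset.mem_image_of_mem _ hx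
  · intro hx
    obtain ⟨y, hy, hyx⟩ := Finset.mem_image.mp hx
    rwa [← π.2.injective hyx]

noncomputable def restrictE1 (π : PPerm) (S : Finset (Fin π.1)) : Fin S.card ≃o S :=
  S.orderIsoOfFin rfl

noncomputable def restrictE2 (π : PPerm) (S : Finset (Fin π.1)) :
    Fin S.card ≃o (S.image π.2) :=
  (S.image π.2).orderIsoOfFin (Finset.card_image_of_injective _ π.2.injective)

def restrictMid (π : PPerm) (S : Finset (Fin π.1)) :
    {x // x ∈ S} ≃ {y // y ∈ S.image π.2} :=
  π.2.subtypeEquiv (restrict_mem_iff π S)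

noncomputable def restrictP (π : PPerm) (S : Finset (Fin π.1)) : PPerm :=
  ⟨S.card, (restrictE1 π S).toEquiv.trans
    ((restrictMid π S).trans (restrictE2 π S).symm.toEquiv)⟩

lemma restrictP_card (π : PPerm) (S : Finset (Fin π.1)) : (restrictP π S).1 = S.card := rfl

lemma restrictP_apply (π : PPerm) (S : Finset (Fin π.1)) (x : Fin S.card) :
    (restrictP π S).2 x = (restrictE2 π S).symm (restrictMid π S (restrictE1 π S x)) := rfl

lemma restrictP_pattern (π : PPerm) (S : Finset (Fin π.1)) :
    PatternOf π (↑S) (restrictP π S) := by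
  refine ⟨fun i => ((restrictE1 π S) i : Fin π.1), ?_, ?_, ?_⟩
  · intro i j hij
    exact Subtype.coe_lt_coe.mpr ((restrictE1 π S).strictMono hij)
  · ext p
    constructor
    · rintro ⟨i, rfl⟩; exact ((restrictE1 π S) i).2
    · intro hp
      exact ⟨(restrictE1 π S).symm ⟨p, hp⟩, by simp⟩
  · intro i j
    show (restrictE2 π S).symm (restrictMid π S (restrictE1 π S i)) <
      (restrictE2 π S).symm (restrictMid π S (restrictE1 π S j)) ↔ _
    refine Iff.trans ((restrictE2 π S).symm.lt_iff_lt) ?_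
    rw [← Subtype.coe_lt_coe]
    simp [restrictMid, Equiv.subtypeEquiv_apply]
lemma patternOf_contains {S : Set (Fin π.1)} (h : PatternOf π S σ) : Contains π σ := by
  obtain ⟨f, hm, _, hiff⟩ := h
  exact ⟨f, hm, hiff⟩

/-- Pull back an occurrence lying inside `S` through a pattern of `S`. -/
lemma pattern_pull {S : Set (Fin π.1)} (hp : PatternOf π S σ)
    {h : Fin ρ.1 → Fin π.1} (hm : StrictMono h) (hmem : ∀ i, h i ∈ S)
    (hiff : ∀ i j, ρ.2 i < ρ.2 j ↔ π.2 (h i) < π.2 (h j)) : Contains σ ρ := by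
  obtain ⟨f, hfm, hfr, hfi⟩ := hp
  rcases Nat.eq_zero_or_pos ρ.1 with h0 | h0
  · refine ⟨fun i => absurd i.isLt (by omega), fun i j _ => absurd i.isLt (by omega),
      fun i j => absurd i.isLt (by omega)⟩
  · have hne : Nonempty (Fin σ.1) := by
      have := hmem ⟨0, h0⟩
      rw [← hfr] at this
      obtain ⟨a, _⟩ := this
      exact ⟨a⟩
    set g : Fin ρ.1 → Fin σ.1 := fun i => Function.invFun f (h i) with hg
    have hfg : ∀ i, f (g i) = h i := by
      intro i
      have : h i ∈ Set.range f := hfr ▸ hmem i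
      exact Function.invFun_eq this
    refine ⟨g, ?_, ?_⟩
    · intro i j hij
      have : f (g i) < f (g j) := by rw [hfg, hfg]; exact hm hij
      exact hfm.lt_iff_lt.mp this
    · intro i j
      rw [hiff i j, ← hfg i, ← hfg j, ← hfi]

/-- Push an occurrence in a pattern of `S` forward to an occurrence inside `S`. -/
lemma pattern_push {S : Set (Fin π.1)} (hp : PatternOf π S σ) (hc : Contains σ ρ) :
    ∃ h : Fin ρ.1 → Fin π.1, StrictMono h ∧ (∀ i, h i ∈ S) ∧
      ∀ i j, ρ.2 i < ρ.2 j ↔ π.2 (h i) < π.2 (h j) := by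
  obtain ⟨f, hfm, hfr, hfi⟩ := hp
  obtain ⟨g, hgm, hgi⟩ := hc
  exact ⟨f ∘ g, hfm.comp hgm, fun i => hfr ▸ Set.mem_range_self _,
    fun i j => (hgi i j).trans (hfi _ _)⟩

lemma card_filter_lt (n k : ℕ) (hk : k ≤ n) :
    (Finset.univ.filter (fun p : Fin n => (p : ℕ) < k)).card = k := by
  have : Finset.univ.filter (fun p : Fin n => (p : ℕ) < k)
      = (Finset.univ : Finset (Fin k)).map (Fin.castLEEmb hk) := by
    ext q
    rw [Finset.mem_filter, Finset.mem_map]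
    constructor
    · rintro ⟨-, hq⟩
      exact ⟨⟨(q : ℕ), hq⟩, Finset.mem_univ _, Fin.ext rfl⟩
    · rintro ⟨i, -, rfl⟩
      exact ⟨Finset.mem_univ _, i.isLt⟩
  rw [this, Finset.card_map, Finset.card_univ, Fintype.card_fin]

lemma strictMono_range_eq {m : ℕ} {α : Type*} [LinearOrder α] {f g : Fin m → α}
    (hf : StrictMono f) (hg : StrictMono g) (h : Set.range f = Set.range g) : f = g := by
  haveI : WellFoundedLT (Fin m) := inferInstance
  exact (StrictMono.range_inj hf hg).mp h

lemma contains_p3142 {a b c d : Fin π.1} (hab : a < b) (hbc : b < c) (hcd : c < d)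
    (v1 : π.2 b < π.2 d) (v2 : π.2 d < π.2 a) (v3 : π.2 a < π.2 c) :
    Contains π p3142 := by
  have v4 : π.2 b < π.2 a := lt_trans v1 v2
  have v5 : π.2 b < π.2 c := lt_trans v4 v3
  have v6 : π.2 d < π.2 c := lt_trans v2 v3
  refine ⟨![a, b, c, d], ?_, ?_⟩
  · intro x y hxy
    fin_cases x <;> fin_cases y <;>
      first
        | exact absurd hxy (by decide)
        | exact hab | exact hbc | exact hcd
        | exact lt_trans hab hbc | exact lt_trans hbc hcd
        | exact lt_trans hab (lt_trans hbc hcd)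
  · intro x y
    fin_cases x <;> fin_cases y <;>
      first
        | exact iff_of_true (by decide) (by assumption)
        | exact iff_of_false (by decide) (lt_irrefl _)
        | exact iff_of_false (by decide) (asymm (by assumption))

lemma contains_p2413 {a b c d : Fin π.1} (hab : a < b) (hbc : b < c) (hcd : c < d)
    (v1 : π.2 c < π.2 a) (v2 : π.2 a < π.2 d) (v3 : π.2 d < π.2 b) :
    Contains π p2413 := by
  have v4 : π.2 c < π.2 d := lt_trans v1 v2
  have v5 : π.2 a < π.2 b := lt_trans v2 v3
  have v6 : π.2 c < π.2 b := lt_trans v4 v3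
  refine ⟨![a, b, c, d], ?_, ?_⟩
  · intro x y hxy
    fin_cases x <;> fin_cases y <;>
      first
        | exact absurd hxy (by decide)
        | exact hab | exact hbc | exact hcd
        | exact lt_trans hab hbc | exact lt_trans hbc hcd
        | exact lt_trans hab (lt_trans hbc hcd)
  · intro x y
    fin_cases x <;> fin_cases y <;>
      first
        | exact iff_of_true (by decide) (by assumption)
        | exact iff_of_false (by decide) (lt_irrefl _)
        | exact iff_of_false (by decide) (asymm (by assumption))

lemma p2413_no_skew_cut (k : ℕ) (h1 : 0 < k) (h2 : k < p2413.1) : ¬ cutSkew p2413 k := by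
  have h4 : p2413.1 = 4 := rfl
  rw [h4] at h2
  interval_cases k <;> · unfold cutSkew; decide

lemma p3142_no_skew_cut (k : ℕ) (h1 : 0 < k) (h2 : k < p3142.1) : ¬ cutSkew p3142 k := by
  have h4 : p3142.1 = 4 := rfl
  rw [h4] at h2
  interval_cases k <;> · unfold cutSkew; decide

lemma exists_pattern (π : PPerm) (S : Finset (Fin π.1)) :
    ∃ σ : PPerm, σ.1 = S.card ∧ PatternOf π (↑S) σ :=
  ⟨restrictP π S, rfl, restrictP_pattern π S⟩

lemma val_lt_of_eq {a b : ℕ} (h : a = b) (i : Fin a) : (i : ℕ) < b := by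
  have := i.isLt; omega
set_option maxHeartbeats 4000000 in
lemma separable_decomp : ∀ n : ℕ, ∀ π : PPerm, π.1 = n → π ∈ SepA → 2 ≤ π.1 →
    (∃ k, 0 < k ∧ k < π.1 ∧ cutSum π k) ∨ (∃ k, 0 < k ∧ k < π.1 ∧ cutSkew π k) := by
  intro n
  induction n using Nat.strong_induction_on with
  | _ n IH =>
  intro π hn hsep h2
  rcases eq_or_lt_of_le h2 with hbase | h3
  · -- base case : length 2
    have hb : π.1 = 2 := by omega
    have hne : π.2 ⟨0, by omega⟩ ≠ π.2 ⟨1, by omega⟩ := fun e => by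
      have h' := π.2.injective e
      have : (0 : ℕ) = 1 := congrArg Fin.val h'
      omega
    have hq1 : ∀ q : Fin π.1, 1 ≤ (q : ℕ) → q = ⟨1, by omega⟩ := by
      intro q hq; apply Fin.ext; have := q.isLt; simp; omega
    have hp0 : ∀ p : Fin π.1, (p : ℕ) < 1 → p = ⟨0, by omega⟩ := by
      intro p hp; apply Fin.ext; simp; omega
    rcases lt_or_gt_of_ne hne with hlt | hgt
    · left; exact ⟨1, by omega, by omega, fun p q hp hq => by
        rw [hp0 p hp, hq1 q hq]; exact hlt⟩
    · right; exact ⟨1, by omega, by omega, fun p q hp hq => by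
        rw [hp0 p hp, hq1 q hq]; exact hgt⟩
  · -- inductive step : length ≥ 3
    have hn3 : 3 ≤ n := by omega
    have hnlt : n - 1 < π.1 := by omega
    classical
    obtain ⟨π', hcardS, hpat⟩ :=
      exists_pattern π (Finset.univ.filter (fun p : Fin π.1 => (p : ℕ) < n - 1))
    have hScard : (Finset.univ.filter (fun p : Fin π.1 => (p : ℕ) < n - 1)).card = n - 1 := by
      have := card_filter_lt π.1 (n-1) (by omega)
      exact this
    have hcard' : π'.1 = n - 1 := by rw [hcardS, hScard]
    obtain ⟨f, hfm, hfr, hfi⟩ := hpat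
    have hfrS : ∀ p : Fin π.1, p ∈ Set.range f ↔ (p : ℕ) < n - 1 := by
      intro p; rw [hfr]; simp
    clear hfr hcardS hScard
    have hπ'sep : π' ∈ SepA := sepA_closed hsep ⟨f, hfm, hfi⟩
    -- identify the embedding with the inclusion of the initial segment
    have hval : ∀ i : Fin π'.1, (f i : ℕ) = (i : ℕ) := by
      have hgm : StrictMono (fun i : Fin π'.1 =>
          (⟨(i : ℕ), lt_trans (hcard' ▸ i.isLt) hnlt⟩ : Fin π.1)) := by
        intro i j hij; rw [Fin.lt_def]; exact Fin.lt_def.mp hij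
      have hgr : Set.range f = Set.range (fun i : Fin π'.1 =>
          (⟨(i : ℕ), lt_trans (hcard' ▸ i.isLt) hnlt⟩ : Fin π.1)) := by
        ext p
        rw [hfrS p]
        constructor
        · intro hp
          exact ⟨⟨(p : ℕ), hcard'.symm ▸ hp⟩, Fin.ext rfl⟩
        · rintro ⟨i, rfl⟩
          exact val_lt_of_eq hcard' i
      have he : f = _ := strictMono_range_eq hfm hgm hgr
      intro i; rw [he]
    have hfid : ∀ (p : Fin π.1) (hp : (p : ℕ) < n - 1),
        f ⟨(p : ℕ), hcard'.symm ▸ hp⟩ = p := by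
      intro p hp; apply Fin.ext; rw [hval]
    have htrans : ∀ (p q : Fin π.1) (hp : (p : ℕ) < n - 1) (hq : (q : ℕ) < n - 1),
        π.2 p < π.2 q ↔
          π'.2 ⟨(p : ℕ), hcard'.symm ▸ hp⟩ < π'.2 ⟨(q : ℕ), hcard'.symm ▸ hq⟩ := by
      intro p q hp hq
      have h' := hfi ⟨(p : ℕ), hcard'.symm ▸ hp⟩ ⟨(q : ℕ), hcard'.symm ▸ hq⟩
      rw [hfid p hp, hfid q hq] at h'
      exact h'.symm
    clear hval hfid hfrS hfm
    set z : Fin π.1 := ⟨n - 1, hnlt⟩ with hz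
    have hzv : (z : ℕ) = n - 1 := rfl
    clear_value z
    clear hz
    have hztrick : ∀ p : Fin π.1, (p : ℕ) < n - 1 → π.2 p < π.2 z ∨ π.2 z < π.2 p := by
      intro p hp
      rcases lt_trichotomy (π.2 p) (π.2 z) with h | h | h
      · exact Or.inl h
      · exfalso
        have hpz : p = z := π.2.injective h
        rw [hpz, hzv] at hp; omega
      · exact Or.inr h
    have hzval : ∀ q : Fin π.1, n - 1 ≤ (q : ℕ) → q = z := by
      intro q hq; apply Fin.ext; rw [hzv]; have := q.isLt; omega
    have hcuts := IH (n-1) (by omega) π' hcard' hπ'sep (by omega)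
    by_cases hallLow : ∀ p : Fin π.1, (p : ℕ) < n - 1 → π.2 p < π.2 z
    · left
      refine ⟨n - 1, by omega, by omega, fun p q hp hq => ?_⟩
      rw [hzval q (by omega)]
      exact hallLow p (by omega)
    by_cases hallHigh : ∀ p : Fin π.1, (p : ℕ) < n - 1 → π.2 z < π.2 p
    · right
      refine ⟨n - 1, by omega, by omega, fun p q hp hq => ?_⟩
      rw [hzval q (by omega)]
      exact hallHigh p (by omega)
    push_neg at hallLow hallHigh
    obtain ⟨pl, hpl1, hpl2⟩ := hallHigh
    obtain ⟨ph, hph1, hph2⟩ := hallLow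
    have hpllow : π.2 pl < π.2 z := by
      rcases hztrick pl hpl1 with h | h
      · exact h
      · exact absurd h (not_lt.mpr hpl2)
    have hphhigh : π.2 z < π.2 ph := by
      rcases hztrick ph hph1 with h | h
      · exact absurd h (not_lt.mpr hph2)
      · exact h
    rcases hcuts with ⟨c, hc0, hcn, hcut⟩ | ⟨c, hc0, hcn, hcut⟩
    all_goals rw [hcard'] at hcn
    · -- sum cut at c in π'
      have hAB : ∀ p q : Fin π.1, (p : ℕ) < c → c ≤ (q : ℕ) → (q : ℕ) < n - 1 →
          π.2 p < π.2 q := by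
        intro p q hp hq1 hq2
        rw [htrans p q (by omega) (by omega)]
        exact hcut _ _ hp hq1
      by_cases hallA : ∀ p : Fin π.1, (p : ℕ) < c → π.2 p < π.2 z
      · left
        refine ⟨c, hc0, by omega, fun p q hp hq => ?_⟩
        rcases lt_or_ge (q : ℕ) (n-1) with h | h
        · exact hAB p q hp hq h
        · rw [hzval q (by omega)]; exact hallA p hp
      · push_neg at hallA
        obtain ⟨a2, ha2c, ha2h⟩ := hallA
        have ha2high : π.2 z < π.2 a2 := by
          rcases hztrick a2 (by omega) with h | h
          · exact absurd h (not_lt.mpr ha2h)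
          · exact h
        have hBhigh : ∀ q : Fin π.1, c ≤ (q : ℕ) → (q : ℕ) < n - 1 → π.2 z < π.2 q := by
          intro q hq1 hq2
          rcases hztrick q hq2 with h | h
          · exact absurd (lt_trans (hAB a2 q ha2c hq1 hq2) h) (asymm ha2high)
          · exact h
        have horder : ∀ x y : Fin π.1, (x : ℕ) < c → (y : ℕ) < c →
            π.2 z < π.2 x → π.2 y < π.2 z → y < x := by
          intro x y hx hy hxh hyl
          by_contra hcon
          push_neg at hcon
          have hxy : x < y := by
            rcases lt_or_eq_of_le hcon with h | h
            · exact h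
            · exfalso; rw [h] at hxh; exact absurd (lt_trans hyl hxh) (lt_irrefl _)
          have hc1 : y < (⟨c, by omega⟩ : Fin π.1) := by rw [Fin.lt_def]; exact hy
          have hc2 : (⟨c, by omega⟩ : Fin π.1) < z := by
            rw [Fin.lt_def]; exact lt_of_lt_of_eq hcn hzv.symm
          exact hsep.2 (contains_p3142 hxy hc1 hc2 hyl hxh
            (hAB x ⟨c, by omega⟩ hx (le_refl _) hcn))
        have hexh : ∃ m : ℕ, ∃ hm : m < π.1, m < c ∧ π.2 z < π.2 ⟨m, hm⟩ := by
          refine ⟨(a2 : ℕ), a2.isLt, ha2c, ?_⟩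
          have he : (⟨(a2 : ℕ), a2.isLt⟩ : Fin π.1) = a2 := Fin.ext rfl
          rw [he]; exact ha2high
        obtain ⟨hkm, hk1, hk2⟩ := Nat.find_spec hexh
        have hplA : (pl : ℕ) < c := by
          by_contra hcon
          push_neg at hcon
          exact absurd (hBhigh pl hcon hpl1) (asymm hpllow)
        have hk0 : 0 < Nat.find hexh := by
          have h' := horder ⟨Nat.find hexh, hkm⟩ pl hk1 hplA hk2 hpllow
          have h2 : (pl : ℕ) < Nat.find hexh := Fin.lt_def.mp h'
          omega
        left
        refine ⟨Nat.find hexh, hk0, by omega, fun p q hp hq => ?_⟩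
        have hplow : π.2 p < π.2 z := by
          have hnh := Nat.find_min hexh (m := (p : ℕ)) (by omega)
          push_neg at hnh
          have h' := hnh p.isLt (by omega)
          have hpeq : (⟨(p : ℕ), p.isLt⟩ : Fin π.1) = p := Fin.ext rfl
          rw [hpeq] at h'
          rcases hztrick p (by omega) with h | h
          · exact h
          · exact absurd h (not_lt.mpr h')
        rcases lt_or_ge (q : ℕ) c with h | h
        · rcases hztrick q (by omega) with hlow | hhigh
          · exfalso
            have h' := horder ⟨Nat.find hexh, hkm⟩ q hk1 h hk2 hlow
            have h2 : (q : ℕ) < Nat.find hexh := Fin.lt_def.mp h'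
            omega
          · exact lt_trans hplow hhigh
        · rcases lt_or_ge (q : ℕ) (n-1) with h2 | h2
          · exact hAB p q (by omega) h h2
          · rw [hzval q (by omega)]; exact hplow
    · -- skew cut at c in π'
      have hAB : ∀ p q : Fin π.1, (p : ℕ) < c → c ≤ (q : ℕ) → (q : ℕ) < n - 1 →
          π.2 q < π.2 p := by
        intro p q hp hq1 hq2
        have h' := hcut (⟨(p : ℕ), hcard'.symm ▸ (by omega : (p : ℕ) < n - 1)⟩ : Fin π'.1)
          ⟨(q : ℕ), hcard'.symm ▸ (by omega : (q : ℕ) < n - 1)⟩ hp hq1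
        exact (htrans q p (by omega) (by omega)).mpr h'
      by_cases hallA : ∀ p : Fin π.1, (p : ℕ) < c → π.2 z < π.2 p
      · right
        refine ⟨c, hc0, by omega, fun p q hp hq => ?_⟩
        rcases lt_or_ge (q : ℕ) (n-1) with h | h
        · exact hAB p q hp hq h
        · rw [hzval q (by omega)]; exact hallA p hp
      · push_neg at hallA
        obtain ⟨a2, ha2c, ha2h⟩ := hallA
        have ha2low : π.2 a2 < π.2 z := by
          rcases hztrick a2 (by omega) with h | h
          · exact h
          · exact absurd h (not_lt.mpr ha2h)
        have hBlow : ∀ q : Fin π.1, c ≤ (q : ℕ) → (q : ℕ) < n - 1 → π.2 q < π.2 z := by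
          intro q hq1 hq2
          rcases hztrick q hq2 with h | h
          · exact h
          · exact absurd (lt_trans h (lt_trans (hAB a2 q ha2c hq1 hq2) ha2low))
              (lt_irrefl _)
        have horder : ∀ x y : Fin π.1, (x : ℕ) < c → (y : ℕ) < c →
            π.2 x < π.2 z → π.2 z < π.2 y → y < x := by
          intro x y hx hy hxl hyh
          by_contra hcon
          push_neg at hcon
          have hxy : x < y := by
            rcases lt_or_eq_of_le hcon with h | h
            · exact h
            · exfalso; rw [h] at hxl; exact absurd (lt_trans hyh hxl) (lt_irrefl _)
          have hc1 : y < (⟨c, by omega⟩ : Fin π.1) := by rw [Fin.lt_def]; exact hy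
          have hc2 : (⟨c, by omega⟩ : Fin π.1) < z := by
            rw [Fin.lt_def]; exact lt_of_lt_of_eq hcn hzv.symm
          exact hsep.1 (contains_p2413 hxy hc1 hc2
            (hAB x ⟨c, by omega⟩ hx (le_refl _) hcn) hxl hyh)
        have hexh : ∃ m : ℕ, ∃ hm : m < π.1, m < c ∧ π.2 ⟨m, hm⟩ < π.2 z := by
          refine ⟨(a2 : ℕ), a2.isLt, ha2c, ?_⟩
          have he : (⟨(a2 : ℕ), a2.isLt⟩ : Fin π.1) = a2 := Fin.ext rfl
          rw [he]; exact ha2low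
        obtain ⟨hkm, hk1, hk2⟩ := Nat.find_spec hexh
        have hphA : (ph : ℕ) < c := by
          by_contra hcon
          push_neg at hcon
          exact absurd (hBlow ph hcon hph1) (asymm hphhigh)
        have hk0 : 0 < Nat.find hexh := by
          have h' := horder ⟨Nat.find hexh, hkm⟩ ph hk1 hphA hk2 hphhigh
          have h2 : (ph : ℕ) < Nat.find hexh := Fin.lt_def.mp h'
          omega
        right
        refine ⟨Nat.find hexh, hk0, by omega, fun p q hp hq => ?_⟩
        have hphigh : π.2 z < π.2 p := by
          have hnh := Nat.find_min hexh (m := (p : ℕ)) (by omega)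
          push_neg at hnh
          have h' := hnh p.isLt (by omega)
          have hpeq : (⟨(p : ℕ), p.isLt⟩ : Fin π.1) = p := Fin.ext rfl
          rw [hpeq] at h'
          rcases hztrick p (by omega) with h | h
          · exact absurd h (not_lt.mpr h')
          · exact h
        rcases lt_or_ge (q : ℕ) c with h | h
        · rcases hztrick q (by omega) with hlow | hhigh
          · exact lt_trans hlow hphigh
          · exfalso
            have h' := horder ⟨Nat.find hexh, hkm⟩ q hk1 h hk2 hhigh
            have h2 : (q : ℕ) < Nat.find hexh := Fin.lt_def.mp h'
            omega
        · rcases lt_or_ge (q : ℕ) (n-1) with h2 | h2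
          · exact hAB p q (by omega) h h2
          · rw [hzval q (by omega)]; exact hphigh
lemma span_skew_cut {σ : PPerm} {g : Fin π.1 → Fin σ.1} (hmono : Monotone g)
    (hpairs : ∀ p q, g p ≠ g q → (π.2 p < π.2 q ↔ σ.2 (g p) < σ.2 (g q)))
    (hσ : σ ∈ DecCl) {ρ : PPerm} {h : Fin ρ.1 → Fin π.1} (hm : StrictMono h)
    (hiff : ∀ i j, ρ.2 i < ρ.2 j ↔ π.2 (h i) < π.2 (h j))
    (hρ : 0 < ρ.1) (hspan : ¬ ∃ b, ∀ i, g (h i) = b) :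
    ∃ k, 0 < k ∧ k < ρ.1 ∧ cutSkew ρ k := by
  push_neg at hspan
  obtain ⟨i0, hi0⟩ := hspan (g (h ⟨0, hρ⟩))
  have hgh : Monotone (fun i => g (h i)) := hmono.comp hm.monotone
  have hex : ∃ m : ℕ, ∃ hm' : m < ρ.1, g (h ⟨m, hm'⟩) ≠ g (h ⟨0, hρ⟩) := by
    refine ⟨(i0 : ℕ), i0.isLt, ?_⟩
    have he : (⟨(i0 : ℕ), i0.isLt⟩ : Fin ρ.1) = i0 := Fin.ext rfl
    rw [he]; exact hi0
  obtain ⟨hkm, hkprop⟩ := Nat.find_spec hex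
  have hk0 : 0 < Nat.find hex := by
    rcases Nat.eq_zero_or_pos (Nat.find hex) with h0 | h0
    · exfalso
      apply hkprop
      congr 1
      apply Fin.ext
      simpa using h0
    · exact h0
  refine ⟨Nat.find hex, hk0, by omega, ?_⟩
  intro p q hp hq
  have hpblock : g (h p) = g (h ⟨0, hρ⟩) := by
    have hnm := Nat.find_min hex (m := (p : ℕ)) (by omega)
    push_neg at hnm
    have h' := hnm p.isLt
    have he : (⟨(p : ℕ), p.isLt⟩ : Fin ρ.1) = p := Fin.ext rfl
    rwa [he] at h'
  have hlt : g (h p) < g (h q) := by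
    have h1 : g (h ⟨Nat.find hex, hkm⟩) ≤ g (h q) := hgh (by
      rw [Fin.le_def]; exact hq)
    have h2 : g (h ⟨0, hρ⟩) ≤ g (h ⟨Nat.find hex, hkm⟩) := hgh (by
      rw [Fin.le_def]; exact Nat.zero_le _)
    rw [hpblock]
    exact lt_of_lt_of_le (lt_of_le_of_ne h2 (Ne.symm hkprop)) h1
  have hvalgt : π.2 (h q) < π.2 (h p) :=
    (hpairs (h q) (h p) (ne_of_gt hlt)).mpr (decCl_rel hσ hlt)
  exact (hiff q p).mpr hvalgt

lemma inflate_subset (F : Set PPerm) :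
    Inflate DecCl (Avs F) ⊆
      Avs ((fun τ => psum τ pone) '' F ∪ (fun τ => psum pone τ) '' F) := by
  rintro π ⟨σ, hσD, g, hgmono, hgsurj, hpairs, hblocks⟩
  have havoid : ∀ ρ : PPerm, 0 < ρ.1 →
      (∀ k, 0 < k → k < ρ.1 → ¬ cutSkew ρ k) →
      (∀ τb ∈ Avs F, ¬ Contains τb ρ) → ¬ Contains π ρ := by
    rintro ρ hρ hnc hbl ⟨h, hm, hiff⟩
    by_cases hspan : ∃ b, ∀ i : Fin ρ.1, g (h i) = b
    · obtain ⟨b, hb⟩ := hspan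
      obtain ⟨τ, hτ, hpat⟩ := hblocks b
      exact hbl τ hτ (pattern_pull hpat hm (fun i => hb i) hiff)
    · obtain ⟨k, h1, h2, h3⟩ := span_skew_cut hgmono hpairs hσD hm hiff hρ hspan
      exact hnc k h1 h2 h3
  refine ⟨⟨?_, ?_⟩, ?_⟩
  · exact havoid p2413 (by norm_num [p2413, mkP]) p2413_no_skew_cut
      (fun τb hτb => hτb.1.1)
  · exact havoid p3142 (by norm_num [p3142, mkP]) p3142_no_skew_cut
      (fun τb hτb => hτb.1.2)
  · rintro ψ (⟨τ, hτF, rfl⟩ | ⟨τ, hτF, rfl⟩) hcont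
    · obtain ⟨fo, hfo, hfoiff, m, hpos, hval⟩ := contains_psum_pone_elim hcont
      have hsame : ∀ i, g (fo i) = g m := by
        intro i
        by_contra hne
        have hlt : g (fo i) < g m := lt_of_le_of_ne (hgmono (le_of_lt (hpos i))) hne
        have h' := (hpairs (fo i) m hne).mp (hval i)
        exact absurd h' (asymm (decCl_rel hσD hlt))
      obtain ⟨τb, hτb, hpat⟩ := hblocks (g m)
      exact hτb.2 τ hτF (pattern_pull hpat hfo (fun i => hsame i) hfoiff)
    · obtain ⟨fo, hfo, hfoiff, m, hpos, hval⟩ := contains_pone_psum_elim hcont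
      have hsame : ∀ i, g (fo i) = g m := by
        intro i
        by_contra hne
        have hlt : g m < g (fo i) := lt_of_le_of_ne (hgmono (le_of_lt (hpos i)))
          (fun e => hne e.symm)
        have h' := (hpairs m (fo i) (ne_of_lt hlt)).mp (hval i)
        exact absurd h' (asymm (decCl_rel hσD hlt))
      obtain ⟨τb, hτb, hpat⟩ := hblocks (g m)
      exact hτb.2 τ hτF (pattern_pull hpat hfo (fun i => hsame i) hfoiff)
lemma decCl_lt_iff (h : σ ∈ DecCl) {i j : Fin σ.1} (hne : i ≠ j) :
    σ.2 i < σ.2 j ↔ j < i := by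
  constructor
  · intro hlt
    rcases lt_trichotomy i j with h' | h' | h'
    · exact absurd hlt (asymm (decCl_rel h h'))
    · exact absurd h' hne
    · exact h'
  · exact fun h' => decCl_rel h h'

lemma pone_mem_decCl : pone ∈ DecCl :=
  decCl_of_rev (fun i j hij => absurd hij (pone_not_lt i j))

lemma no_cut_avoids {F : Set PPerm} (hF : ∀ τ ∈ F, SkewDecomp τ) {π : PPerm}
    (hπ : π ∈ Avs ((fun τ => psum τ pone) '' F ∪ (fun τ => psum pone τ) '' F))
    (hnc : ∀ k, 0 < k → k < π.1 → ¬ cutSkew π k) : π ∈ Avs F := by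
  refine ⟨hπ.1, ?_⟩
  intro υ hυ hcont
  obtain ⟨h2υ, d, hd0, hdn, hdcut⟩ := skewDecomp_cut (hF υ hυ)
  obtain ⟨h, hm, hiff⟩ := hcont
  have hn2 : 2 ≤ π.1 := by
    have : υ.1 ≤ π.1 := by
      have := Fintype.card_le_of_injective h hm.injective
      simpa using this
    omega
  obtain ⟨c, hc0, hcn, hcsum⟩ | ⟨k, h1, h2, h3⟩ :=
    separable_decomp π.1 π rfl hπ.1 hn2
  swap
  · exact hnc k h1 h2 h3
  by_cases hall : ∀ i : Fin υ.1, (h i : ℕ) < c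
  · have hc : Contains π (psum υ pone) := by
      refine contains_psum_pone_intro hm hiff (m := ⟨c, by omega⟩) ?_ ?_
      · intro i; rw [Fin.lt_def]; exact hall i
      · intro i; exact hcsum (h i) ⟨c, by omega⟩ (hall i) (le_refl _)
    exact hπ.2 (psum υ pone) (Or.inl ⟨υ, hυ, rfl⟩) hc
  · push_neg at hall
    obtain ⟨i1, hi1⟩ := hall
    by_cases hall2 : ∀ i : Fin υ.1, c ≤ (h i : ℕ)
    · have hc : Contains π (psum pone υ) := by
        refine contains_pone_psum_intro hm hiff (m := ⟨0, by omega⟩) ?_ ?_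
        · intro i; rw [Fin.lt_def]
          exact lt_of_lt_of_le hc0 (hall2 i)
        · intro i; exact hcsum ⟨0, by omega⟩ (h i) hc0 (hall2 i)
      exact hπ.2 (psum pone υ) (Or.inr ⟨υ, hυ, rfl⟩) hc
    · push_neg at hall2
      obtain ⟨i2, hi2⟩ := hall2
      have hex : ∃ m : ℕ, ∃ hm' : m < υ.1, c ≤ (h ⟨m, hm'⟩ : ℕ) := by
        refine ⟨(i1 : ℕ), i1.isLt, ?_⟩
        have he : (⟨(i1 : ℕ), i1.isLt⟩ : Fin υ.1) = i1 := Fin.ext rfl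
        rw [he]; exact hi1
      obtain ⟨hkm, hkp⟩ := Nat.find_spec hex
      have hlow : ∀ i : Fin υ.1, (i : ℕ) < Nat.find hex → (h i : ℕ) < c := by
        intro i hik
        have hnm := Nat.find_min hex (m := (i : ℕ)) hik
        push_neg at hnm
        have h' := hnm i.isLt
        have he : (⟨(i : ℕ), i.isLt⟩ : Fin υ.1) = i := Fin.ext rfl
        rwa [he] at h'
      have hk0 : 0 < Nat.find hex := by
        rcases Nat.eq_zero_or_pos (Nat.find hex) with h0 | h0
        · exfalso
          obtain ⟨z0, hz0⟩ : ∃ z0 : Fin υ.1, (z0 : ℕ) = 0 := ⟨⟨0, by omega⟩, rfl⟩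
          have he : (⟨Nat.find hex, hkm⟩ : Fin υ.1) = z0 := by
            apply Fin.ext; rw [hz0]; exact h0
          rw [he] at hkp
          have hle : h z0 ≤ h i2 := hm.monotone (by
            rw [Fin.le_def, hz0]; exact Nat.zero_le _)
          have h1' := Fin.le_def.mp hle
          omega
        · exact h0
      have hcs : cutSum υ (Nat.find hex) := by
        intro i j hik hjk
        apply (hiff i j).mpr
        have hhj : c ≤ (h j : ℕ) := by
          have hle : h ⟨Nat.find hex, hkm⟩ ≤ h j := hm.monotone (by
            rw [Fin.le_def]; exact hjk)
          have := Fin.le_def.mp hle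
          omega
        exact hcsum (h i) (h j) (hlow i hik) hhj
      exact not_cut_both (π := υ) hk0 (by omega) hd0 hdn hcs hdcut

lemma inflate_empty {X : Set PPerm} (hX : pempty ∈ DecCl → True) {π : PPerm}
    (h0 : π.1 = 0) : π ∈ Inflate DecCl X := by
  refine ⟨pempty, decCl_of_rev (fun i j hij => i.elim0), fun p => (Fin.cast h0 p).elim0,
    ?_, ?_, ?_, ?_⟩
  · intro a b _; exact (Fin.cast h0 a).elim0
  · intro b; exact b.elim0
  · intro p q _; exact (Fin.cast h0 p).elim0
  · intro b; exact b.elim0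

lemma inflate_single {X : Set PPerm} {π : PPerm} (hπ : π ∈ X) (h0 : 0 < π.1) :
    π ∈ Inflate DecCl X := by
  have hone : ∀ b b' : Fin pone.1, b = b' := by
    intro b b'; apply Fin.ext
    have h1 := b.isLt; have h2 := b'.isLt
    have : pone.1 = 1 := rfl
    omega
  refine ⟨pone, pone_mem_decCl, fun _ => ⟨0, by norm_num [pone]⟩,
    fun a b _ => le_refl _, ?_, ?_, ?_⟩
  · intro b; exact ⟨⟨0, h0⟩, hone _ _⟩
  · intro p q hne; exact absurd (hone _ _) hne
  · intro b
    refine ⟨π, hπ, id, strictMono_id, ?_, fun i j => Iff.rfl⟩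
    ext p
    simp only [Set.mem_range, Set.mem_setOf_eq]
    exact ⟨fun _ => hone _ _, fun _ => ⟨p, rfl⟩⟩
lemma inflate_glue {X : Set PPerm} {π π1 π2 : PPerm} {k : ℕ} (hk0 : 0 < k) (hkn : k < π.1)
    (hcut : cutSkew π k)
    (hp1 : PatternOf π {p | (p : ℕ) < k} π1) (hp2 : PatternOf π {p | k ≤ (p : ℕ)} π2)
    (h1 : π1 ∈ Inflate DecCl X) (h2 : π2 ∈ Inflate DecCl X) :
    π ∈ Inflate DecCl X := by
  classical
  obtain ⟨f1, hf1m, hf1r, hf1i⟩ := hp1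
  obtain ⟨f2, hf2m, hf2r, hf2i⟩ := hp2
  obtain ⟨σ1, hσ1D, g1, hg1m, hg1s, hg1p, hg1b⟩ := h1
  obtain ⟨σ2, hσ2D, g2, hg2m, hg2s, hg2p, hg2b⟩ := h2
  haveI hne1 : Nonempty (Fin π1.1) := by
    have h' : (⟨0, by omega⟩ : Fin π.1) ∈ Set.range f1 := by rw [hf1r]; exact hk0
    obtain ⟨x, _⟩ := h'; exact ⟨x⟩
  haveI hne2 : Nonempty (Fin π2.1) := by
    have h' : (⟨k, hkn⟩ : Fin π.1) ∈ Set.range f2 := by rw [hf2r]; exact le_refl k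
    obtain ⟨x, _⟩ := h'; exact ⟨x⟩
  have A1 : ∀ x, (f1 x : ℕ) < k := by
    intro x
    have h' : f1 x ∈ {p : Fin π.1 | (p : ℕ) < k} := by
      rw [← hf1r]; exact Set.mem_range_self x
    exact h'
  have A2 : ∀ x, k ≤ (f2 x : ℕ) := by
    intro x
    have h' : f2 x ∈ {p : Fin π.1 | k ≤ (p : ℕ)} := by
      rw [← hf2r]; exact Set.mem_range_self x
    exact h'
  have hfix1 : ∀ x, Function.invFun f1 (f1 x) = x :=
    Function.leftInverse_invFun hf1m.injective
  have hfix2 : ∀ x, Function.invFun f2 (f2 x) = x :=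
    Function.leftInverse_invFun hf2m.injective
  have hinv1 : ∀ p : Fin π.1, (p : ℕ) < k → f1 (Function.invFun f1 p) = p := by
    intro p hp
    have h' : p ∈ Set.range f1 := by rw [hf1r]; exact hp
    exact Function.invFun_eq h'
  have hinv2 : ∀ p : Fin π.1, k ≤ (p : ℕ) → f2 (Function.invFun f2 p) = p := by
    intro p hp
    have h' : p ∈ Set.range f2 := by rw [hf2r]; exact hp
    exact Function.invFun_eq h'
  set g : Fin π.1 → Fin (σ1.1 + σ2.1) := fun p =>
    if hp : (p : ℕ) < k then Fin.castAdd σ2.1 (g1 (Function.invFun f1 p))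
    else Fin.natAdd σ1.1 (g2 (Function.invFun f2 p)) with hgdef
  have B1 : ∀ p : Fin π.1, (p : ℕ) < k → g p = Fin.castAdd σ2.1 (g1 (Function.invFun f1 p)) :=
    fun p hp => dif_pos hp
  have B2 : ∀ p : Fin π.1, ¬ (p : ℕ) < k → g p = Fin.natAdd σ1.1 (g2 (Function.invFun f2 p)) :=
    fun p hp => dif_neg hp
  have C1 : ∀ x, g (f1 x) = Fin.castAdd σ2.1 (g1 x) := by
    intro x; rw [B1 (f1 x) (A1 x), hfix1]
  have C2 : ∀ x, g (f2 x) = Fin.natAdd σ1.1 (g2 x) := by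
    intro x; rw [B2 (f2 x) (not_lt.mpr (A2 x)), hfix2]
  refine ⟨⟨σ1.1 + σ2.1, Fin.revPerm⟩, ?_, g, ?_, ?_, ?_, ?_⟩
  · apply decCl_of_rev
    intro i j hij
    exact Fin.rev_lt_rev.mpr hij
  · -- monotone
    intro p q hpq
    by_cases hp : (p : ℕ) < k
    · by_cases hq : (q : ℕ) < k
      · rw [B1 p hp, B1 q hq, Fin.le_def, Fin.coe_castAdd, Fin.coe_castAdd, ← Fin.le_def]
        apply hg1m
        apply hf1m.le_iff_le.mp
        rw [hinv1 p hp, hinv1 q hq]; exact hpq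
      · rw [B1 p hp, B2 q hq]
        exact le_of_lt (castAdd_lt_natAdd _ _)
    · have hq : ¬ (q : ℕ) < k := fun hq => hp (lt_of_le_of_lt (Fin.le_def.mp hpq) hq)
      rw [B2 p hp, B2 q hq, Fin.le_def, Fin.coe_natAdd, Fin.coe_natAdd]
      have h' : g2 (Function.invFun f2 p) ≤ g2 (Function.invFun f2 q) := by
        apply hg2m
        apply hf2m.le_iff_le.mp
        rw [hinv2 p (not_lt.mp hp), hinv2 q (not_lt.mp hq)]; exact hpq
      have := Fin.le_def.mp h'
      omega
  · -- surjective
    intro b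
    induction b using Fin.addCases with
    | left b1 =>
      obtain ⟨x, hx⟩ := hg1s b1
      exact ⟨f1 x, by rw [C1, hx]⟩
    | right b2 =>
      obtain ⟨x, hx⟩ := hg2s b2
      exact ⟨f2 x, by rw [C2, hx]⟩
  · -- pairs
    intro p q hne
    show π.2 p < π.2 q ↔ Fin.revPerm (g p) < Fin.revPerm (g q)
    rw [Fin.revPerm_apply, Fin.revPerm_apply, Fin.rev_lt_rev]
    by_cases hp : (p : ℕ) < k
    · by_cases hq : (q : ℕ) < k
      · have hgne : g1 (Function.invFun f1 p) ≠ g1 (Function.invFun f1 q) := by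
          intro e
          apply hne
          rw [B1 p hp, B1 q hq, e]
        have hval : π.2 p < π.2 q ↔
            σ1.2 (g1 (Function.invFun f1 p)) < σ1.2 (g1 (Function.invFun f1 q)) := by
          conv_lhs => rw [← hinv1 p hp, ← hinv1 q hq]
          rw [← hf1i]
          exact hg1p _ _ (by
            intro e; exact hgne e)
        rw [B1 p hp, B1 q hq, hval, decCl_lt_iff hσ1D hgne, castAdd_lt_iff]
      · apply iff_of_false
        · exact asymm (hcut p q hp (not_lt.mp hq))
        · rw [B1 p hp, B2 q hq]
          exact asymm (castAdd_lt_natAdd _ _)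
    · by_cases hq : (q : ℕ) < k
      · apply iff_of_true
        · exact hcut q p hq (not_lt.mp hp)
        · rw [B2 p hp, B1 q hq]
          exact castAdd_lt_natAdd _ _
      · have hgne : g2 (Function.invFun f2 p) ≠ g2 (Function.invFun f2 q) := by
          intro e
          apply hne
          rw [B2 p hp, B2 q hq, e]
        have hval : π.2 p < π.2 q ↔
            σ2.2 (g2 (Function.invFun f2 p)) < σ2.2 (g2 (Function.invFun f2 q)) := by
          conv_lhs => rw [← hinv2 p (not_lt.mp hp), ← hinv2 q (not_lt.mp hq)]
          rw [← hf2i]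
          exact hg2p _ _ (by
            intro e; exact hgne e)
        rw [B2 p hp, B2 q hq, hval, decCl_lt_iff hσ2D hgne, natAdd_lt_iff]
  · -- blocks
    intro b
    induction b using Fin.addCases with
    | left b1 =>
      obtain ⟨τ, hτX, e, hem, her, hei⟩ := hg1b b1
      refine ⟨τ, hτX, fun i => f1 (e i), hf1m.comp hem, ?_,
        fun i j => (hei i j).trans (hf1i _ _)⟩
      ext p
      simp only [Set.mem_range, Set.mem_setOf_eq]
      constructor
      · rintro ⟨i, rfl⟩
        rw [C1]
        have h' : g1 (e i) = b1 := by
          have hh : e i ∈ {x | g1 x = b1} := by rw [← her]; exact Set.mem_range_self i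
          exact hh
        rw [h']
      · intro hgp
        have hp : (p : ℕ) < k := by
          by_contra hp
          rw [B2 p hp] at hgp
          have h' := congrArg Fin.val hgp
          rw [Fin.coe_natAdd, Fin.coe_castAdd] at h'
          have := b1.isLt; omega
        have hx : g1 (Function.invFun f1 p) = b1 := by
          rw [B1 p hp] at hgp
          have h' := congrArg Fin.val hgp
          rw [Fin.coe_castAdd, Fin.coe_castAdd] at h'
          exact Fin.ext h'
        have h' : Function.invFun f1 p ∈ Set.range e := by rw [her]; exact hx
        obtain ⟨i, hi⟩ := h'
        exact ⟨i, by rw [hi, hinv1 p hp]⟩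
    | right b2 =>
      obtain ⟨τ, hτX, e, hem, her, hei⟩ := hg2b b2
      refine ⟨τ, hτX, fun i => f2 (e i), hf2m.comp hem, ?_,
        fun i j => (hei i j).trans (hf2i _ _)⟩
      ext p
      simp only [Set.mem_range, Set.mem_setOf_eq]
      constructor
      · rintro ⟨i, rfl⟩
        rw [C2]
        have h' : g2 (e i) = b2 := by
          have hh : e i ∈ {x | g2 x = b2} := by rw [← her]; exact Set.mem_range_self i
          exact hh
        rw [h']
      · intro hgp
        have hp : ¬ (p : ℕ) < k := by
          intro hp
          rw [B1 p hp] at hgp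
          have h' := congrArg Fin.val hgp
          rw [Fin.coe_natAdd, Fin.coe_castAdd] at h'
          have := (g1 (Function.invFun f1 p)).isLt; omega
        have hx : g2 (Function.invFun f2 p) = b2 := by
          rw [B2 p hp] at hgp
          have h' := congrArg Fin.val hgp
          rw [Fin.coe_natAdd, Fin.coe_natAdd] at h'
          exact Fin.ext (by omega)
        have h' : Function.invFun f2 p ∈ Set.range e := by rw [her]; exact hx
        obtain ⟨i, hi⟩ := h'
        exact ⟨i, by rw [hi, hinv2 p (not_lt.mp hp)]⟩
lemma subset_inflate (F : Set PPerm) (hF : ∀ τ ∈ F, SkewDecomp τ) :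
    ∀ n : ℕ, ∀ π : PPerm, π.1 = n →
      π ∈ Avs ((fun τ => psum τ pone) '' F ∪ (fun τ => psum pone τ) '' F) →
      π ∈ Inflate DecCl (Avs F) := by
  intro n
  induction n using Nat.strong_induction_on with
  | _ n IH =>
  intro π hn hπ
  rcases Nat.eq_zero_or_pos π.1 with h0 | h0
  · exact inflate_empty (fun _ => trivial) h0
  by_cases hsc : ∃ k, 0 < k ∧ k < π.1 ∧ cutSkew π k
  · obtain ⟨k, hk0, hkn, hcut⟩ := hsc
    classical
    obtain ⟨π1, hc1, hpat1⟩ :=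
      exists_pattern π (Finset.univ.filter (fun p : Fin π.1 => (p : ℕ) < k))
    obtain ⟨π2, hc2, hpat2⟩ :=
      exists_pattern π (Finset.univ.filter (fun p : Fin π.1 => ¬ (p : ℕ) < k))
    have hcard1 : π1.1 = k := by rw [hc1, card_filter_lt π.1 k (le_of_lt hkn)]
    have hcard2 : π2.1 = π.1 - k := by
      rw [hc2]
      have h1 := card_filter_lt π.1 k (le_of_lt hkn)
      have h2 := Finset.card_filter_add_card_filter_not
        (s := (Finset.univ : Finset (Fin π.1))) (p := fun p => (p : ℕ) < k)
      have h3 : (Finset.univ : Finset (Fin π.1)).card = π.1 := by simp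
      omega
    have hset1 : (↑(Finset.univ.filter (fun p : Fin π.1 => (p : ℕ) < k)) : Set (Fin π.1))
        = {p : Fin π.1 | (p : ℕ) < k} := by
      ext p; simp
    have hset2 : (↑(Finset.univ.filter (fun p : Fin π.1 => ¬ (p : ℕ) < k)) : Set (Fin π.1))
        = {p : Fin π.1 | k ≤ (p : ℕ)} := by
      ext p; simp [not_lt]
    rw [hset1] at hpat1
    rw [hset2] at hpat2
    have hπ1 := avs_closed hπ (patternOf_contains hpat1)
    have hπ2 := avs_closed hπ (patternOf_contains hpat2)
    exact inflate_glue hk0 hkn hcut hpat1 hpat2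
      (IH k (by omega) π1 hcard1 hπ1)
      (IH (π.1 - k) (by omega) π2 hcard2 hπ2)
  · push_neg at hsc
    exact inflate_single (no_cut_avoids hF hπ (fun k h1 h2 => hsc k h1 h2)) h0
end Stmt17aux

/-- For a set `F` of skew-decomposable permutations and `X = Avs(F)`,
`D[X] = Avs((F ⊕ 1) ∪ (1 ⊕ F))`. -/
theorem stmt17 (F : Set PPerm) (hF : ∀ τ ∈ F, SkewDecomp τ) :
    Inflate DecCl (Avs F) =
      Avs ((fun τ => psum τ pone) '' F ∪ (fun τ => psum pone τ) '' F) := by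
  apply subset_antisymm
  · exact Stmt17aux.inflate_subset F
  · intro π hπ
    exact Stmt17aux.subset_inflate F hF π.1 π rfl hπ
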